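/- Let s ≥ 8 be an even integer and n ≥ 1 an integer, and define Ŕ_n(t) = n!^{s−6}·2^{12n}·∏_{j=1}^{3n}(t−n−1/2+j)^2 / ∏_{j=0}^{n}(t+j)^s. Then the series ∑_{ν=1}^∞ Ŕ_n(ν−1/2) converges absolutely and there exist rational numbers q_1, …, q_{s/2} such that ∑_{ν=1}^∞ Ŕ_n(ν−1/2) = ∑_{j=1}^{s/2} q_j·ζ(2j); that is, the sum is a rational linear combination of ζ(2), ζ(4), …, ζ(s), with no constant term. -/

import Mathlib

open Finset Filter Polynomial algebraMap


/-- The rational function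
`R̂_n(t) = n!^{s−6} 2^{12n} ∏_{j=1}^{3n} (t−n−1/2+j)^2 / ∏_{j=0}^{n} (t+j)^s`. -/
noncomputable def RzetaHat (s n : ℕ) (t : ℝ) : ℝ :=
  ((Nat.factorial n : ℝ) ^ (s - 6) * 2 ^ (12 * n) *
      ∏ j ∈ Finset.Icc 1 (3 * n), (t - (n : ℝ) - 1 / 2 + (j : ℝ)) ^ 2) /
    ∏ j ∈ Finset.range (n + 1), (t + (j : ℝ)) ^ s

/-- The value of the Riemann zeta function at a natural number `i ≥ 2`,
expressed as the real series `∑_{ℓ=1}^∞ 1/ℓ^i`. -/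
noncomputable def zetaVal (i : ℕ) : ℝ := ∑' ℓ : ℕ, 1 / ((ℓ : ℝ) + 1) ^ i


/-- half-integers are nonzero -/
lemma half_ne (m : ℤ) : (m : ℝ) + 1/2 ≠ 0 := by
  intro h
  have h2 : ((2*m+1 : ℤ) : ℝ) = 0 := by push_cast; linarith
  have h3 : (2*m+1 : ℤ) = 0 := by exact_mod_cast h2
  omega

lemma summable_aux : Summable (fun ν : ℕ => (((ν:ℝ)+1)^2)⁻¹) := by
  have := (Real.summable_nat_pow_inv (p := 2)).mpr one_lt_two
  have h := (summable_nat_add_iff (f := fun n : ℕ => ((n:ℝ)^2)⁻¹) 1).mpr this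
  refine h.congr fun ν => ?_
  push_cast; ring_nf

lemma summable_inv_pow (c : ℝ) (hc : 0 < c) (i : ℕ) (hi : 2 ≤ i) :
    Summable (fun ν : ℕ => (((ν:ℝ)+c)^i)⁻¹) := by
  set c' := min c 1 with hc'
  have hc'0 : 0 < c' := lt_min hc one_pos
  refine Summable.of_nonneg_of_le (fun ν => ?_) (fun ν => ?_)
    (summable_aux.mul_left ((c'^i)⁻¹))
  · positivity
  · have h1 : c' * ((ν:ℝ)+1) ≤ (ν:ℝ)+c := by
      have h1a : c' ≤ c := min_le_left _ _
      have h1b : c' ≤ 1 := min_le_right _ _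
      nlinarith [Nat.cast_nonneg (α := ℝ) ν]
    have h3 : c'^i * ((ν:ℝ)+1)^2 ≤ ((ν:ℝ)+c)^i := by
      calc c'^i * ((ν:ℝ)+1)^2 ≤ c'^i * ((ν:ℝ)+1)^i := by
            have : ((ν:ℝ)+1)^2 ≤ ((ν:ℝ)+1)^i :=
              pow_le_pow_right₀ (by nlinarith [Nat.cast_nonneg (α := ℝ) ν]) hi
            exact mul_le_mul_of_nonneg_left this (by positivity)
        _ = (c' * ((ν:ℝ)+1))^i := (mul_pow _ _ _).symm
        _ ≤ ((ν:ℝ)+c)^i := pow_le_pow_left₀ (by positivity) h1 i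
    rw [← mul_inv]
    exact inv_anti₀ (by positivity) h3

lemma summable_zeta (i : ℕ) (hi : 2 ≤ i) : Summable (fun ℓ : ℕ => 1 / ((ℓ:ℝ)+1)^i) := by
  refine ((summable_inv_pow 1 one_pos i hi).congr fun ν => ?_)
  rw [one_div]

lemma hasSum_base (i : ℕ) (hi : 2 ≤ i) :
    HasSum (fun ν : ℕ => (((ν:ℝ)+1/2)^i)⁻¹) (((2:ℝ)^i - 1) * zetaVal i) := by
  have hB : Summable (fun ν : ℕ => (((ν:ℝ)+1/2)^i)⁻¹) :=
    summable_inv_pow (1/2) (by norm_num) i hi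
  have hz : Summable (fun ℓ : ℕ => 1 / ((ℓ:ℝ)+1)^i) := summable_zeta i hi
  set f : ℕ → ℝ := fun ℓ => 1 / ((ℓ:ℝ)+1)^i with hf
  have he : Summable (fun k : ℕ => f (2*k)) :=
    hz.comp_injective (fun a b h => by omega)
  have ho : Summable (fun k : ℕ => f (2*k+1)) :=
    hz.comp_injective (fun a b h => by omega)
  have key := tsum_even_add_odd he ho
  have h1 : ∀ k : ℕ, f (2*k) = ((2:ℝ)^i)⁻¹ * (((k:ℝ)+1/2)^i)⁻¹ := by
    intro k
    have : ((2*k : ℕ) : ℝ) + 1 = 2 * ((k:ℝ)+1/2) := by push_cast; ring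
    rw [hf]; simp only [this, mul_pow, one_div, mul_inv]
  have h2 : ∀ k : ℕ, f (2*k+1) = ((2:ℝ)^i)⁻¹ * (1 / ((k:ℝ)+1)^i) := by
    intro k
    have : ((2*k+1 : ℕ) : ℝ) + 1 = 2 * ((k:ℝ)+1) := by push_cast; ring
    rw [hf]; simp only [this, mul_pow, one_div, mul_inv]
  have hte : (∑' k, f (2*k)) = ((2:ℝ)^i)⁻¹ * ∑' ν : ℕ, (((ν:ℝ)+1/2)^i)⁻¹ := by
    rw [tsum_congr h1, tsum_mul_left]
  have hto : (∑' k, f (2*k+1)) = ((2:ℝ)^i)⁻¹ * zetaVal i := by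
    rw [tsum_congr h2, tsum_mul_left]; rfl
  have hzv : (∑' ℓ, f ℓ) = zetaVal i := rfl
  rw [hte, hto, hzv] at key
  have h2i : ((2:ℝ)^i) ≠ 0 := by positivity
  set B := ∑' ν : ℕ, (((ν:ℝ)+1/2)^i)⁻¹ with hBdef
  have hkey2 : (2:ℝ)^i * ((2^i)⁻¹ * B + (2^i)⁻¹ * zetaVal i) = 2^i * zetaVal i := by
    rw [key]
  have hBeq : B = ((2:ℝ)^i - 1) * zetaVal i := by
    field_simp at hkey2
    linarith
  exact hBeq ▸ hB.hasSum

lemma hasSum_tele (c : ℝ) (hc : ∀ ν : ℕ, (ν:ℝ) + c ≠ 0) :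
    HasSum (fun ν : ℕ => ((ν:ℝ)+c)⁻¹ - ((ν:ℝ)+c+1)⁻¹) c⁻¹ := by
  have hc' : ∀ ν : ℕ, (ν:ℝ) + c + 1 ≠ 0 := fun ν h => hc (ν+1) (by push_cast; linarith)
  have hsum : Summable (fun ν : ℕ => ((ν:ℝ)+c)⁻¹ - ((ν:ℝ)+c+1)⁻¹) := by
    have hb : ∀ᶠ ν : ℕ in atTop, ‖((ν:ℝ)+c)⁻¹ - ((ν:ℝ)+c+1)⁻¹‖ ≤ 4 * ‖(((ν:ℝ)+1)^2)⁻¹‖ := by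
      filter_upwards [eventually_ge_atTop (Nat.ceil (2*|c|+2))] with ν hν
      have hν' : 2*|c|+2 ≤ (ν:ℝ) := le_trans (Nat.le_ceil _) (by exact_mod_cast hν)
      have habs : -|c| ≤ c := neg_abs_le c
      have h1 : ((ν:ℝ)+1)/2 ≤ (ν:ℝ)+c := by
        nlinarith
      have h0 : (0:ℝ) < (ν:ℝ)+c := by nlinarith
      have h0' : (0:ℝ) < (ν:ℝ)+c+1 := by linarith
      have heq : ((ν:ℝ)+c)⁻¹ - ((ν:ℝ)+c+1)⁻¹ = (((ν:ℝ)+c)*((ν:ℝ)+c+1))⁻¹ := by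
        field_simp; ring
      rw [heq, Real.norm_eq_abs, Real.norm_eq_abs, abs_of_pos (by positivity),
        abs_of_pos (by positivity)]
      have h4 : ((ν:ℝ)+1)^2/4 ≤ ((ν:ℝ)+c)*((ν:ℝ)+c+1) := by nlinarith
      calc (((ν:ℝ)+c)*((ν:ℝ)+c+1))⁻¹ ≤ (((ν:ℝ)+1)^2/4)⁻¹ := by
            apply inv_anti₀ (by positivity) h4
        _ = 4 * (((ν:ℝ)+1)^2)⁻¹ := by rw [inv_div, div_eq_mul_inv]
    exact summable_of_isBigO_nat summable_aux (Asymptotics.IsBigO.of_bound 4 hb)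
  rw [hsum.hasSum_iff_tendsto_nat]
  have hps : ∀ N : ℕ, ∑ ν ∈ range N, (((ν:ℝ)+c)⁻¹ - ((ν:ℝ)+c+1)⁻¹) = c⁻¹ - ((N:ℝ)+c)⁻¹ := by
    intro N
    have h := Finset.sum_range_sub' (f := fun ν : ℕ => ((ν:ℝ)+c)⁻¹) N
    calc ∑ ν ∈ range N, (((ν:ℝ)+c)⁻¹ - ((ν:ℝ)+c+1)⁻¹)
        = ∑ ν ∈ range N, ((((ν:ℕ):ℝ)+c)⁻¹ - ((((ν+1:ℕ)):ℝ)+c)⁻¹) := by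
          apply Finset.sum_congr rfl; intro ν _; push_cast; ring_nf
      _ = (((0:ℕ):ℝ)+c)⁻¹ - ((N:ℝ)+c)⁻¹ := h
      _ = c⁻¹ - ((N:ℝ)+c)⁻¹ := by norm_num
  simp only [hps]
  have : Tendsto (fun N : ℕ => ((N:ℝ)+c)⁻¹) atTop (nhds 0) := by
    apply Tendsto.inv_tendsto_atTop
    exact tendsto_atTop_add_const_right atTop c tendsto_natCast_atTop_atTop
  simpa using tendsto_const_nhds.sub this

lemma hasSum_pair_one (k : ℕ) :
    HasSum (fun ν : ℕ => ((ν:ℝ)+1/2+k)⁻¹ - ((ν:ℝ)+1/2-k)⁻¹) 0 := by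
  have key : ∀ j : ℕ, HasSum
      (fun ν : ℕ => -(((ν:ℝ)+(1/2-(k:ℝ)+j))⁻¹ - ((ν:ℝ)+(1/2-(k:ℝ)+j)+1)⁻¹))
      (-((1/2-(k:ℝ)+j)⁻¹)) := by
    intro j
    refine (hasSum_tele (1/2-(k:ℝ)+j) ?_).neg
    intro ν
    have := half_ne ((ν:ℤ) - k + j)
    intro h; apply this; push_cast; linarith
  have hsum := hasSum_sum (f := fun (j : ℕ) (ν : ℕ) =>
      -(((ν:ℝ)+(1/2-(k:ℝ)+j))⁻¹ - ((ν:ℝ)+(1/2-(k:ℝ)+j)+1)⁻¹))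
    (s := range (2*k)) (fun j _ => key j)
  have hpt : ∀ ν : ℕ, (∑ j ∈ range (2*k),
      -(((ν:ℝ)+(1/2-(k:ℝ)+j))⁻¹ - ((ν:ℝ)+(1/2-(k:ℝ)+j)+1)⁻¹))
      = ((ν:ℝ)+1/2+k)⁻¹ - ((ν:ℝ)+1/2-k)⁻¹ := by
    intro ν
    have h := Finset.sum_range_sub' (f := fun j : ℕ => ((ν:ℝ)+1/2-(k:ℝ)+j)⁻¹) (2*k)
    have : (∑ j ∈ range (2*k),
        -(((ν:ℝ)+(1/2-(k:ℝ)+j))⁻¹ - ((ν:ℝ)+(1/2-(k:ℝ)+j)+1)⁻¹))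
        = -∑ j ∈ range (2*k), (((ν:ℝ)+1/2-(k:ℝ)+(j:ℕ))⁻¹ - ((ν:ℝ)+1/2-(k:ℝ)+((j+1:ℕ):ℝ))⁻¹) := by
      rw [← Finset.sum_neg_distrib]
      apply Finset.sum_congr rfl
      intro j _
      push_cast
      ring_nf
    rw [this, h]
    push_cast
    ring_nf
  have hval : (∑ j ∈ range (2*k), -((1/2-(k:ℝ)+j)⁻¹)) = 0 := by
    have hrefl := Finset.sum_range_reflect (f := fun j : ℕ => ((1/2-(k:ℝ)+j)⁻¹)) (2*k)
    have hneg : (∑ j ∈ range (2*k), ((1/2-(k:ℝ)+j)⁻¹))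
        = -∑ j ∈ range (2*k), ((1/2-(k:ℝ)+j)⁻¹) := by
      nth_rewrite 1 [← hrefl]
      rw [← Finset.sum_neg_distrib]
      apply Finset.sum_congr rfl
      intro j hj
      rw [Finset.mem_range] at hj
      have h1 : (2*k-1-j) + (j+1) = 2*k := by omega
      have h2 : (((2*k-1-j) + (j+1) : ℕ) : ℝ) = 2*(k:ℝ) := by rw [h1]; push_cast; ring
      push_cast at h2
      have hc : ((2*k-1-j : ℕ) : ℝ) = 2*(k:ℝ)-1-(j:ℝ) := by linarith
      rw [hc, neg_inv]
      congr 1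
      ring
    rw [Finset.sum_neg_distrib]
    linarith
  rw [← hval]
  exact hsum.congr_fun (fun ν => (hpt ν).symm)

lemma hasSum_pair (k i : ℕ) (hi : 1 ≤ i) :
    HasSum (fun ν : ℕ => (((ν:ℝ)+1/2+(k:ℝ))^i)⁻¹ + (-1:ℝ)^i * (((ν:ℝ)+1/2-(k:ℝ))^i)⁻¹)
      ((1+(-1:ℝ)^i) * (((2:ℝ)^i - 1) * zetaVal i)) := by
  rcases eq_or_lt_of_le hi with h1 | h2
  · -- i = 1
    have hv : (1+(-1:ℝ)^i) * (((2:ℝ)^i - 1) * zetaVal i) = 0 := by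
      rw [← h1]; norm_num
    rw [hv]
    refine (hasSum_pair_one k).congr_fun fun ν => ?_
    rw [← h1]
    norm_num
    ring
  · have hi2 : 2 ≤ i := h2
    have base := hasSum_base i hi2
    set B := ((2:ℝ)^i - 1) * zetaVal i with hB
    set base0 : ℕ → ℝ := fun ν => (((ν:ℝ)+1/2)^i)⁻¹ with hbase0
    set H := ∑ m ∈ range k, base0 m with hH
    have h1 : HasSum (fun ν : ℕ => (((ν:ℝ)+1/2+(k:ℝ))^i)⁻¹) (B - H) := by
      have hshift := (hasSum_nat_add_iff (f := base0) k).mpr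
        (show HasSum base0 ((B - H) + H) by rw [sub_add_cancel]; exact base)
      refine hshift.congr_fun fun ν => ?_
      show (((ν:ℝ)+1/2+(k:ℝ))^i)⁻¹ = ((((ν+k:ℕ):ℝ)+1/2)^i)⁻¹
      push_cast
      ring_nf
    set f₂ : ℕ → ℝ := fun ν => (((ν:ℝ)+1/2-(k:ℝ))^i)⁻¹ with hf₂
    have h2s : HasSum (fun ν : ℕ => f₂ (ν+k)) B := by
      refine base.congr_fun fun ν => ?_
      show f₂ (ν+k) = (((ν:ℝ)+1/2)^i)⁻¹
      rw [hf₂]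
      push_cast
      ring_nf
    have h2 : HasSum f₂ (B + ∑ m ∈ range k, f₂ m) :=
      (hasSum_nat_add_iff (f := f₂) k).mp h2s
    have hf2sum : (∑ m ∈ range k, f₂ m) = (-1:ℝ)^i * H := by
      rw [hH, Finset.mul_sum]
      rw [← Finset.sum_range_reflect (fun m => f₂ m) k]
      apply Finset.sum_congr rfl
      intro m hm
      rw [Finset.mem_range] at hm
      have h1' : (k-1-m) + (m+1) = k := by omega
      have h2' : (((k-1-m) + (m+1) : ℕ) : ℝ) = (k:ℝ) := by rw [h1']
      push_cast at h2'
      have hc : ((k-1-m : ℕ) : ℝ) = (k:ℝ)-1-(m:ℝ) := by linarith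
      rw [hf₂]
      show (((( k-1-m : ℕ):ℝ)+1/2-(k:ℝ))^i)⁻¹ = (-1:ℝ)^i * (((m:ℝ)+1/2)^i)⁻¹
      rw [hc]
      have : ((k:ℝ)-1-(m:ℝ)+1/2-(k:ℝ)) = -(((m:ℝ))+1/2) := by ring
      rw [this, neg_pow, mul_inv]
      have hinv : ((-1:ℝ)^i)⁻¹ = (-1:ℝ)^i := by
        rcases neg_one_pow_eq_or ℝ i with h | h <;> rw [h] <;> norm_num
      rw [hinv]
    rw [hf2sum] at h2
    have hcomb := h1.add (h2.mul_left ((-1:ℝ)^i))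
    have hval : (B - H) + (-1:ℝ)^i * (B + (-1:ℝ)^i * H) = (1+(-1:ℝ)^i) * B := by
      have hsq : (-1:ℝ)^i * (-1:ℝ)^i = 1 := by
        rw [← mul_pow]; norm_num
      linear_combination H * hsq
    rw [← hval]
    exact hcomb

lemma exists_decomp (s n : ℕ) (hs : 8 ≤ s) (hn : 1 ≤ n) :
    ∃ b : ℕ → ℕ → ℚ, ∀ t : ℝ, (∀ j ∈ Finset.range (n+1), t + (j:ℝ) ≠ 0) →
      RzetaHat s n t =
        ∑ k ∈ Finset.range (n+1), ∑ d ∈ Finset.range s,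
          (b k d : ℝ) * (((t + (k:ℝ))^(s-d))⁻¹) := by
  classical
  set α : ℚ := (Nat.factorial n : ℚ) ^ (s - 6) * 2 ^ (12 * n) with hα
  have hα0 : α ≠ 0 := by
    rw [hα]; positivity
  set f : ℚ[X] := C α * ∏ j ∈ Finset.Icc 1 (3*n), (X + C ((j:ℚ) - n - 1/2))^2 with hf
  set g : ℕ → ℚ[X] := fun k => (X + C (k:ℚ))^s with hg
  set E : ℕ → ℚ[X] := fun k => ∏ j ∈ (Finset.range (n+1)).erase k, g j with hE
  set D : ℚ[X] := ∏ j ∈ Finset.range (n+1), g j with hD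
  have hgmonic : ∀ k, (g k).Monic := fun k => (monic_X_add_C _).pow _
  have hgdeg : ∀ k, (g k).degree = (s : ℕ) := by
    intro k
    rw [hg]
    simp only []
    rw [degree_pow, degree_X_add_C]
    simp
  have hcop : (↑(Finset.range (n+1)) : Set ℕ).Pairwise fun i j => IsCoprime (g i) (g j) := by
    intro a _ b _ hab
    have hinj : Function.Injective (fun k : ℕ => -(k:ℚ)) := by
      intro x y h; simpa using h
    have := Polynomial.pairwise_coprime_X_sub_C hinj hab
    simp only [map_neg, sub_neg_eq_add] at this
    exact this.pow
  obtain ⟨q, r, hdeg, heq⟩ :=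
    div_eq_quo_add_sum_rem_div (RatFunc ℚ) f (fun i _ => hgmonic i) hcop
  -- clear denominators
  have hginj : Function.Injective (algebraMap ℚ[X] (RatFunc ℚ)) :=
    IsFractionRing.injective _ _
  have hg0K : ∀ k, (algebraMap ℚ[X] (RatFunc ℚ)) (g k) ≠ 0 := fun k =>
    (map_ne_zero_iff _ hginj).mpr (hgmonic k).ne_zero
  have hD0K : (∏ i ∈ Finset.range (n+1), algebraMap ℚ[X] (RatFunc ℚ) (g i)) ≠ 0 :=
    Finset.prod_ne_zero_iff.mpr (fun i _ => hg0K i)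
  have heq2 : algebraMap ℚ[X] (RatFunc ℚ) f =
      algebraMap ℚ[X] (RatFunc ℚ) (q * D + ∑ k ∈ Finset.range (n+1), r k * E k) := by
    rw [div_eq_iff hD0K] at heq
    have heq' : (algebraMap ℚ[X] (RatFunc ℚ)) f =
        ((algebraMap ℚ[X] (RatFunc ℚ)) q + ∑ i ∈ Finset.range (n+1),
          (algebraMap ℚ[X] (RatFunc ℚ)) (r i) / (algebraMap ℚ[X] (RatFunc ℚ)) (g i)) *
          ∏ i ∈ Finset.range (n+1), (algebraMap ℚ[X] (RatFunc ℚ)) (g i) := heq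
    rw [heq', map_add, map_mul, map_sum]
    rw [add_mul, Finset.sum_mul]
    congr 1
    · rw [hD, map_prod]
    · apply Finset.sum_congr rfl
      intro k hk
      rw [map_mul, hE]
      simp only []
      rw [map_prod]
      have hrec : (∏ i ∈ Finset.range (n+1), (algebraMap ℚ[X] (RatFunc ℚ)) (g i))
          = (algebraMap ℚ[X] (RatFunc ℚ)) (g k) *
            ∏ i ∈ (Finset.range (n+1)).erase k, (algebraMap ℚ[X] (RatFunc ℚ)) (g i) :=
        (Finset.mul_prod_erase _ _ hk).symm
      rw [hrec]
      field_simp [hg0K k]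
  have hpoly0 : f = q * D + ∑ k ∈ Finset.range (n+1), r k * E k := hginj heq2
  -- degree computations
  have hf0 : f ≠ 0 := by
    rw [hf]
    apply mul_ne_zero (by simpa using hα0)
    apply Finset.prod_ne_zero_iff.mpr
    intro j _
    exact pow_ne_zero _ (X_add_C_ne_zero _)
  have hsm : ∀ (m c : ℕ), m • ((c : ℕ) : WithBot ℕ) = ((m * c : ℕ) : WithBot ℕ) := by
    intro m c
    induction m with
    | zero => simp
    | succ p ih =>
        rw [succ_nsmul, ih, ← Nat.cast_add]
        exact congrArg _ (by ring)
  have hfdeg : f.degree = ((6*n : ℕ) : WithBot ℕ) := by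
    rw [hf, degree_mul, degree_C hα0, degree_prod]
    rw [Finset.sum_congr rfl (fun j (_ : j ∈ Finset.Icc 1 (3*n)) =>
      (show ((X + C ((j:ℚ) - n - 1/2))^2).degree = ((2:ℕ) : WithBot ℕ) from by
        rw [degree_pow, degree_X_add_C,
          show (1 : WithBot ℕ) = ((1:ℕ) : WithBot ℕ) from by simp, hsm]))]
    rw [Finset.sum_const, Nat.card_Icc, hsm, zero_add]
    exact congrArg _ (by omega)
  have hDdeg : D.degree = (((n+1)*s : ℕ) : WithBot ℕ) := by
    rw [hD, degree_prod]
    rw [Finset.sum_congr rfl (fun j _ => hgdeg j)]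
    rw [Finset.sum_const, Finset.card_range, hsm]
  have hEdeg : ∀ k ∈ Finset.range (n+1), (E k).degree = ((n*s : ℕ) : WithBot ℕ) := by
    intro k hk
    rw [hE]
    simp only []
    rw [degree_prod]
    rw [Finset.sum_congr rfl (fun j _ => hgdeg j)]
    rw [Finset.sum_const, Finset.card_erase_of_mem hk, Finset.card_range,
      show n+1-1 = n from rfl, hsm]
  have hsumdeg : (∑ k ∈ Finset.range (n+1), r k * E k).degree < (((n+1)*s : ℕ) : WithBot ℕ) := by
    apply lt_of_le_of_lt (Polynomial.degree_sum_le _ _)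
    rw [Finset.sup_lt_iff (by exact WithBot.bot_lt_coe _)]
    intro k hk
    apply lt_of_le_of_lt (Polynomial.degree_mul_le _ _)
    rw [hEdeg k hk]
    have h1 : (r k).degree < (s : WithBot ℕ) := by rw [← hgdeg k]; exact hdeg k hk
    calc (r k).degree + ((n*s:ℕ) : WithBot ℕ) < (s : WithBot ℕ) + ((n*s:ℕ):WithBot ℕ) :=
          WithBot.add_lt_add_right (by exact WithBot.coe_ne_bot) h1
      _ = (((n+1)*s : ℕ) : WithBot ℕ) := by rw [← Nat.cast_add]; exact congrArg _ (by ring)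
  have hq0 : q = 0 := by
    by_contra hq0
    have h1 : D.degree ≤ (q*D).degree := by
      rw [degree_mul]
      exact le_add_of_nonneg_left (zero_le_degree_iff.mpr hq0)
    have h2 : (q*D).degree < D.degree := by
      have hqd : q * D = f - ∑ k ∈ Finset.range (n+1), r k * E k := by
        rw [hpoly0]; ring
      rw [hqd, hDdeg]
      apply lt_of_le_of_lt (Polynomial.degree_sub_le _ _)
      rw [max_lt_iff]
      constructor
      · rw [hfdeg]
        apply WithBot.coe_lt_coe.mpr
        nlinarith
      · exact hsumdeg
    exact absurd (lt_of_le_of_lt h1 h2) (lt_irrefl _)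
  rw [hq0, zero_mul, zero_add] at hpoly0
  -- Taylor expansion of the remainders
  set b : ℕ → ℕ → ℚ := fun k d => (Polynomial.taylor (-(k:ℚ)) (r k)).coeff d with hb
  have hr : ∀ k ∈ Finset.range (n+1), r k
      = ∑ d ∈ Finset.range s, C (b k d) * (X + C (k:ℚ))^d := by
    intro k hk
    have ht := Polynomial.sum_taylor_eq (r k) (-(k:ℚ))
    rw [Polynomial.sum_over_range' _ (fun d => by simp) s ?_] at ht
    · rw [← ht]
      apply Finset.sum_congr rfl
      intro d _
      rw [map_neg, sub_neg_eq_add]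
    · rw [natDegree_taylor]
      rcases eq_or_ne (r k) 0 with h | h
      · rw [h]; simpa using Nat.lt_of_lt_of_le (by norm_num) hs
      · have h2 := hdeg k hk
        rw [hgdeg k] at h2
        exact (natDegree_lt_iff_degree_lt h).mpr h2
  have hpoly : f = ∑ k ∈ Finset.range (n+1), ∑ d ∈ Finset.range s,
      C (b k d) * (X + C (k:ℚ))^d * E k := by
    rw [hpoly0]
    apply Finset.sum_congr rfl
    intro k hk
    rw [hr k hk, Finset.sum_mul]
  -- evaluate at real t
  refine ⟨b, ?_⟩
  intro t ht
  have happ := congrArg (Polynomial.aeval t) hpoly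
  rw [map_sum] at happ
  have hlhs : Polynomial.aeval t f
      = (Nat.factorial n : ℝ) ^ (s - 6) * 2 ^ (12 * n) *
        ∏ j ∈ Finset.Icc 1 (3 * n), (t - (n : ℝ) - 1 / 2 + (j : ℝ)) ^ 2 := by
    rw [hf, map_mul, map_prod, aeval_C]
    congr 1
    · rw [hα]
      push_cast
      norm_num
    · apply Finset.prod_congr rfl
      intro j _
      rw [map_pow, map_add, aeval_X, aeval_C]
      congr 1
      push_cast
      norm_num
      ring
  have hEval : ∀ k, Polynomial.aeval t (E k)
      = ∏ j ∈ (Finset.range (n+1)).erase k, (t + (j:ℝ))^s := by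
    intro k
    rw [hE]
    simp only []
    rw [map_prod]
    apply Finset.prod_congr rfl
    intro j _
    rw [hg]
    simp only []
    rw [map_pow, map_add, aeval_X, aeval_C]
    norm_num
  have hrhs : ∀ k ∈ Finset.range (n+1), Polynomial.aeval t
      (∑ d ∈ Finset.range s, C (b k d) * (X + C (k:ℚ))^d * E k)
      = ∑ d ∈ Finset.range s, (b k d : ℝ) * (t + (k:ℝ))^d *
          ∏ j ∈ (Finset.range (n+1)).erase k, (t + (j:ℝ))^s := by
    intro k hk
    rw [map_sum]
    apply Finset.sum_congr rfl
    intro d _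
    rw [map_mul, map_mul, aeval_C, map_pow, map_add, aeval_X, aeval_C, hEval k]
    norm_num
  -- now divide
  have hden0 : ∀ j ∈ Finset.range (n+1), (t + (j:ℝ))^s ≠ 0 :=
    fun j hj => pow_ne_zero _ (ht j hj)
  have hDt0 : (∏ j ∈ Finset.range (n+1), (t + (j:ℝ))^s) ≠ 0 :=
    Finset.prod_ne_zero_iff.mpr hden0
  have hunfold : RzetaHat s n t
      = (Polynomial.aeval t f) / ∏ j ∈ Finset.range (n+1), (t + (j:ℝ))^s := by
    rw [RzetaHat, hlhs]
  rw [hunfold, happ, Finset.sum_congr rfl hrhs, Finset.sum_div]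
  apply Finset.sum_congr rfl
  intro k hk
  rw [Finset.sum_div]
  apply Finset.sum_congr rfl
  intro d hd
  have hsplit : (∏ j ∈ Finset.range (n+1), (t + (j:ℝ))^s)
      = (t + (k:ℝ))^s * ∏ j ∈ (Finset.range (n+1)).erase k, (t + (j:ℝ))^s :=
    (Finset.mul_prod_erase _ _ hk).symm
  have hEk0 : (∏ j ∈ (Finset.range (n+1)).erase k, (t + (j:ℝ))^s) ≠ 0 :=
    Finset.prod_ne_zero_iff.mpr (fun j hj => hden0 j (Finset.mem_of_mem_erase hj))
  have htk0 : (t + (k:ℝ)) ≠ 0 := ht k hk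
  rw [hsplit]
  have hds : d ≤ s := le_of_lt (Finset.mem_range.mp hd)
  have hpow : (t + (k:ℝ))^s = (t + (k:ℝ))^(s-d) * (t + (k:ℝ))^d := by
    rw [← pow_add]
    congr 1
    omega
  rw [hpow]
  field_simp

-- functional equation
lemma Rfe (s n : ℕ) (hse : Even s) (t : ℝ) : RzetaHat s n (-(n:ℝ) - t) = RzetaHat s n t := by
  rw [RzetaHat, RzetaHat]
  congr 1
  · congr 1
    refine Finset.prod_nbij' (fun j => 3*n+1-j) (fun j => 3*n+1-j) ?_ ?_ ?_ ?_ ?_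
    · intro a ha; simp only [Finset.mem_Icc] at ha ⊢; omega
    · intro a ha; simp only [Finset.mem_Icc] at ha ⊢; omega
    · intro a ha; simp only [Finset.mem_Icc] at ha; show 3*n+1-(3*n+1-a) = a; omega
    · intro a ha; simp only [Finset.mem_Icc] at ha; show 3*n+1-(3*n+1-a) = a; omega
    · intro j hj
      simp only [Finset.mem_Icc] at hj
      have hc : ((3*n+1-j : ℕ) : ℝ) = 3*(n:ℝ)+1-(j:ℝ) := by
        have h1 : (3*n+1-j) + j = 3*n+1 := by omega
        have h2 : (((3*n+1-j) + j : ℕ) : ℝ) = 3*(n:ℝ)+1 := by rw [h1]; push_cast; ring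
        push_cast at h2
        linarith
      rw [hc]
      rw [show t - (n:ℝ) - 1/2 + (3*(n:ℝ)+1-(j:ℝ)) = -(-(n:ℝ) - t - (n:ℝ) - 1/2 + (j:ℝ)) from by ring]
      rw [neg_pow]
      norm_num
  · rw [← Finset.prod_range_reflect]
    apply Finset.prod_congr rfl
    intro j hj
    rw [Finset.mem_range] at hj
    have hc : ((n+1-1-j : ℕ) : ℝ) = (n:ℝ)-(j:ℝ) := by
      have h1 : (n+1-1-j) + j = n := by omega
      have h2 : (((n+1-1-j) + j : ℕ) : ℝ) = (n:ℝ) := by rw [h1]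
      rw [Nat.cast_add] at h2
      linarith
    rw [hc]
    rw [show -(n:ℝ) - t + ((n:ℝ)-(j:ℝ)) = -(t + j) from by ring]
    exact hse.neg_pow _

-- zeros at negative half-integers
lemma Rzero (s n : ℕ) (ν : ℕ) (hν : ν < 2*n) :
    RzetaHat s n (-(ν:ℝ)-1/2) = 0 := by
  rw [RzetaHat]
  apply div_eq_zero_iff.mpr
  left
  apply mul_eq_zero_of_right
  apply Finset.prod_eq_zero (i := n + ν + 1)
  · simp only [Finset.mem_Icc]; omega
  · have : (((n + ν + 1 : ℕ)) : ℝ) = (n:ℝ) + ν + 1 := by push_cast; ring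
    rw [this]
    ring_nf

lemma Rsummable (s n : ℕ) (hs : 8 ≤ s) (hn : 1 ≤ n) :
    Summable (fun ν : ℕ => RzetaHat s n ((ν:ℝ)+1/2)) := by
  classical
  set β : ℝ := (Nat.factorial n : ℝ) ^ (s - 6) * 2 ^ (12 * n) with hβ
  have hβ0 : β ≠ 0 := by rw [hβ]; positivity
  set fR : ℝ[X] := C β * ∏ j ∈ Finset.Icc 1 (3*n), (X + C ((j:ℝ) - n - 1/2))^2 with hfR
  set DR : ℝ[X] := ∏ j ∈ Finset.range (n+1), (X + C (j:ℝ))^s with hDR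
  have hRe : ∀ t : ℝ, RzetaHat s n t = eval t fR / eval t DR := by
    intro t
    rw [RzetaHat, hfR, hDR, eval_mul, eval_C, eval_prod, eval_prod]
    congr 1
    · congr 1
      apply Finset.prod_congr rfl
      intro j _
      rw [eval_pow, eval_add, eval_X, eval_C]
      ring
    · apply Finset.prod_congr rfl
      intro j _
      rw [eval_pow, eval_add, eval_X, eval_C]
  have hsm : ∀ (m c : ℕ), m • ((c : ℕ) : WithBot ℕ) = ((m * c : ℕ) : WithBot ℕ) := by
    intro m c
    induction m with
    | zero => simp
    | succ p ih =>
        rw [succ_nsmul, ih, ← Nat.cast_add]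
        exact congrArg _ (by ring)
  have hfdeg : (fR * X^2).degree ≤ DR.degree := by
    have h1 : (fR * X^2).degree = ((6*n+2 : ℕ) : WithBot ℕ) := by
      rw [degree_mul, hfR, degree_mul, degree_C hβ0, degree_prod]
      rw [Finset.sum_congr rfl (fun j (_ : j ∈ Finset.Icc 1 (3*n)) =>
        (show ((X + C ((j:ℝ) - n - 1/2))^2).degree = ((2:ℕ) : WithBot ℕ) from by
          rw [degree_pow, degree_X_add_C,
            show (1 : WithBot ℕ) = ((1:ℕ) : WithBot ℕ) from by simp, hsm]))]
      rw [Finset.sum_const, Nat.card_Icc, hsm, zero_add]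
      rw [degree_pow, degree_X, show (1 : WithBot ℕ) = ((1:ℕ) : WithBot ℕ) from by simp, hsm]
      rw [← Nat.cast_add]
      exact congrArg _ (by omega)
    have h2 : DR.degree = (((n+1)*s : ℕ) : WithBot ℕ) := by
      rw [hDR, degree_prod]
      rw [Finset.sum_congr rfl (fun j (_ : j ∈ Finset.range (n+1)) =>
        (show ((X + C ((j:ℝ)))^s).degree = ((s:ℕ) : WithBot ℕ) from by
          rw [degree_pow, degree_X_add_C,
            show (1 : WithBot ℕ) = ((1:ℕ) : WithBot ℕ) from by simp, hsm]
          exact congrArg _ (by omega)))]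
      rw [Finset.sum_const, Finset.card_range, hsm]
    rw [h1, h2]
    exact Nat.cast_le.mpr (by nlinarith)
  have hO := Polynomial.isBigO_of_degree_le (𝕜 := ℝ) (P := fR * X^2) (Q := DR) hfdeg
  obtain ⟨c, hc⟩ := Asymptotics.isBigO_iff.mp hO
  have htend : Tendsto (fun ν : ℕ => (ν:ℝ)+1/2) atTop atTop :=
    tendsto_atTop_add_const_right atTop _ tendsto_natCast_atTop_atTop
  have hbound : ∀ᶠ ν : ℕ in atTop,
      ‖RzetaHat s n ((ν:ℝ)+1/2)‖ ≤ (4*c) * ‖(((ν:ℝ)+1)^2)⁻¹‖ := by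
    filter_upwards [htend.eventually hc] with ν hν
    set x : ℝ := (ν:ℝ)+1/2 with hx
    have hx0 : 0 < x := by rw [hx]; positivity
    have hDpos : 0 < eval x DR := by
      rw [hDR, eval_prod]
      apply Finset.prod_pos
      intro j _
      rw [eval_pow, eval_add, eval_X, eval_C]
      have : (0:ℝ) < x + j := by positivity
      positivity
    have hfx : eval x (fR * X^2) = eval x fR * x^2 := by
      rw [eval_mul, eval_pow, eval_X]
    rw [hfx] at hν
    rw [hRe x]
    rw [Real.norm_eq_abs, Real.norm_eq_abs, abs_div, abs_of_pos hDpos] at *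
    rw [abs_mul, abs_of_pos (by positivity : (0:ℝ) < x^2)] at hν
    have hcnn : 0 ≤ c := by
      by_contra hcn
      push_neg at hcn
      have := hν
      nlinarith [abs_nonneg (eval x fR), abs_nonneg (eval x fR) ]
    have h1 : |eval x fR| / eval x DR ≤ c / x^2 := by
      rw [div_le_div_iff₀ hDpos (by positivity)]
      nlinarith
    have h2 : c / x^2 ≤ 4*c * (((ν:ℝ)+1)^2)⁻¹ := by
      rw [div_eq_mul_inv]
      have hxe : ((ν:ℝ)+1)/2 ≤ x := by rw [hx]; linarith
      have h3 : (((ν:ℝ)+1)^2)/4 ≤ x^2 := by nlinarith [Nat.cast_nonneg (α := ℝ) ν]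
      have h4 : (x^2)⁻¹ ≤ 4 * (((ν:ℝ)+1)^2)⁻¹ := by
        calc (x^2)⁻¹ ≤ ((((ν:ℝ)+1)^2)/4)⁻¹ := inv_anti₀ (by positivity) h3
          _ = 4 * (((ν:ℝ)+1)^2)⁻¹ := by rw [inv_div, div_eq_mul_inv]
      calc c * (x^2)⁻¹ ≤ c * (4 * (((ν:ℝ)+1)^2)⁻¹) :=
            mul_le_mul_of_nonneg_left h4 hcnn
        _ = 4*c * (((ν:ℝ)+1)^2)⁻¹ := by ring
    calc |eval x fR| / eval x DR ≤ c / x^2 := h1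
      _ ≤ 4*c * (((ν:ℝ)+1)^2)⁻¹ := h2
      _ = 4*c * |(((ν:ℝ)+1)^2)⁻¹| := by rw [abs_of_pos (by positivity)]
  exact summable_of_isBigO_nat summable_aux (Asymptotics.isBigO_iff.mpr ⟨4*c, hbound⟩)

theorem stmt19 (s n : ℕ) (hs : 8 ≤ s) (hse : Even s) (hn : 1 ≤ n) :
    Summable (fun ν : ℕ => RzetaHat s n (((ν : ℝ) + 1) - 1 / 2)) ∧
    ∃ q : ℕ → ℚ,
      (∑' ν : ℕ, RzetaHat s n (((ν : ℝ) + 1) - 1 / 2)) =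
        ∑ j ∈ Finset.Icc 1 (s / 2), (q j : ℝ) * zetaVal (2 * j) := by
  classical
  have hpt : ∀ ν : ℕ, ((ν : ℝ) + 1) - 1/2 = (ν:ℝ) + 1/2 := fun ν => by ring
  set F : ℕ → ℝ := fun ν => RzetaHat s n ((ν:ℝ)+1/2) with hFdef
  have hF : Summable F := Rsummable s n hs hn
  have hFc : Summable (fun ν : ℕ => RzetaHat s n (((ν : ℝ) + 1) - 1/2)) := by
    refine hF.congr fun ν => ?_
    rw [hpt ν]
  refine ⟨hFc, ?_⟩
  have htsumFc : (∑' ν : ℕ, RzetaHat s n (((ν : ℝ) + 1) - 1/2)) = ∑' ν, F ν :=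
    tsum_congr fun ν => by rw [hpt ν]
  set G : ℕ → ℝ := fun ν => RzetaHat s n (-(ν:ℝ)-1/2) with hGdef
  have hGF : ∀ ν : ℕ, G (ν+n) = F ν := by
    intro ν
    rw [hGdef, hFdef]
    simp only []
    rw [show -((ν+n : ℕ):ℝ)-1/2 = -(n:ℝ) - ((ν:ℝ)+1/2) from by push_cast; ring]
    exact Rfe s n hse _
  have hG0 : ∀ ν : ℕ, ν < n → G ν = 0 := fun ν hν => Rzero s n ν (by omega)
  have hGsum : Summable G := by
    refine (summable_nat_add_iff n).mp ?_
    exact hF.congr fun ν => (hGF ν).symm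
  have htsumG : (∑' ν, G ν) = ∑' ν, F ν := by
    have h1 := Summable.sum_add_tsum_nat_add (f := G) n hGsum
    have h2 : (∑ i ∈ range n, G i) = 0 :=
      Finset.sum_eq_zero fun i hi => hG0 i (Finset.mem_range.mp hi)
    have h3 : (∑' i : ℕ, G (i+n)) = ∑' ν, F ν := tsum_congr fun i => hGF i
    rw [h2, h3, zero_add] at h1
    exact h1.symm
  obtain ⟨b, hb⟩ := exists_decomp s n hs hn
  have hFd : ∀ ν : ℕ, F ν = ∑ k ∈ range (n+1), ∑ d ∈ range s,
      (b k d : ℝ) * (((((ν:ℝ)+1/2) + (k:ℝ))^(s-d))⁻¹) := by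
    intro ν
    rw [hFdef]
    simp only []
    exact hb ((ν:ℝ)+1/2) (fun j _ => by
      have := half_ne ((ν:ℤ) + j)
      intro h; apply this; push_cast; linarith)
  have hGd : ∀ ν : ℕ, G ν = ∑ k ∈ range (n+1), ∑ d ∈ range s,
      (b k d : ℝ) * ((-1:ℝ)^(s-d) * (((((ν:ℝ)+1/2) - (k:ℝ))^(s-d))⁻¹)) := by
    intro ν
    rw [hGdef]
    simp only []
    rw [hb (-(ν:ℝ)-1/2) (fun j _ => by
      have := half_ne ((j:ℤ) - ν - 1)
      intro h; apply this; push_cast; linarith)]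
    apply Finset.sum_congr rfl
    intro k _
    apply Finset.sum_congr rfl
    intro d _
    congr 1
    rw [show -(ν:ℝ)-1/2 + (k:ℝ) = -(((ν:ℝ)+1/2) - (k:ℝ)) from by ring]
    rw [neg_pow, mul_inv]
    have hinv : ((-1:ℝ)^(s-d))⁻¹ = (-1:ℝ)^(s-d) := by
      rcases neg_one_pow_eq_or ℝ (s-d) with h | h <;> rw [h] <;> norm_num
    rw [hinv]
  -- total value
  set val : ℕ → ℕ → ℝ := fun k d =>
    (1+(-1:ℝ)^(s-d)) * (((2:ℝ)^(s-d) - 1) * zetaVal (s-d)) with hval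
  have hFG : HasSum (fun ν => F ν + G ν)
      (∑ k ∈ range (n+1), ∑ d ∈ range s, (b k d : ℝ) * val k d) := by
    have hks : ∀ k ∈ range (n+1), HasSum
        (fun ν : ℕ => ∑ d ∈ range s, (b k d : ℝ) *
          ((((ν:ℝ)+1/2+(k:ℝ))^(s-d))⁻¹ + (-1:ℝ)^(s-d) * (((ν:ℝ)+1/2-(k:ℝ))^(s-d))⁻¹))
        (∑ d ∈ range s, (b k d : ℝ) * val k d) := by
      intro k _
      apply hasSum_sum
      intro d hd
      have hd1 : 1 ≤ s - d := by
        have := Finset.mem_range.mp hd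
        omega
      exact (hasSum_pair k (s-d) hd1).mul_left _
    have htot := hasSum_sum (s := range (n+1)) hks
    refine htot.congr_fun fun ν => ?_
    rw [hFd ν, hGd ν, ← Finset.sum_add_distrib]
    apply Finset.sum_congr rfl
    intro k _
    rw [← Finset.sum_add_distrib]
    apply Finset.sum_congr rfl
    intro d _
    ring
  have h2F : (∑' ν, F ν) + (∑' ν, F ν)
      = ∑ k ∈ range (n+1), ∑ d ∈ range s, (b k d : ℝ) * val k d := by
    rw [← hFG.tsum_eq, Summable.tsum_add hF hGsum, htsumG]
  -- reindex the double sum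
  set q : ℕ → ℚ := fun j => (∑ k ∈ range (n+1), b k (s-2*j)) * (2^(2*j) - 1) with hq
  refine ⟨q, ?_⟩
  rw [htsumFc]
  set w : ℕ → ℝ := fun d => ∑ k ∈ range (n+1), (b k d : ℝ) * val k d with hw
  have hswap : (∑ k ∈ range (n+1), ∑ d ∈ range s, (b k d : ℝ) * val k d)
      = ∑ d ∈ range s, w d := Finset.sum_comm
  have hodd : ∀ d ∈ range s, ¬ Even d → w d = 0 := by
    intro d hd hodd
    have hsd : Odd (s - d) := by
      rcases hse with ⟨m, hm⟩
      rcases Nat.odd_iff.mp (Nat.not_even_iff_odd.mp hodd) with h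
      have hds : d < s := Finset.mem_range.mp hd
      refine Nat.odd_iff.mpr ?_
      omega
    have : (1+(-1:ℝ)^(s-d)) = 0 := by rw [hsd.neg_one_pow]; ring
    rw [hw]
    simp only []
    apply Finset.sum_eq_zero
    intro k _
    rw [hval]
    simp only []
    rw [this]
    ring
  set ι : ℕ → ℕ := fun j => s - 2*j with hι
  have himg : ∑ d ∈ range s, w d = ∑ j ∈ Finset.Icc 1 (s/2), w (ι j) := by
    rw [← Finset.sum_image (g := ι) (f := w) ?hinj]
    case hinj =>
      intro a ha b' hb' hab
      simp only [Finset.coe_Icc, Set.mem_Icc, Finset.mem_Icc, hι] at ha hb' hab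
      omega
    apply (Finset.sum_subset ?hsub ?hzero).symm
    case hsub =>
      intro d hd
      simp only [Finset.mem_image, Finset.mem_Icc, hι] at hd
      obtain ⟨j, hj, rfl⟩ := hd
      rw [Finset.mem_range]
      omega
    case hzero =>
      intro d hd hnim
      apply hodd d hd
      intro hdeven
      apply hnim
      simp only [Finset.mem_image, Finset.mem_Icc, hι]
      rcases hdeven with ⟨m, hm⟩
      rcases hse with ⟨p, hp⟩
      have hds : d < s := Finset.mem_range.mp hd
      exact ⟨(s-d)/2, by omega, by omega⟩
  have hterm : ∀ j ∈ Finset.Icc 1 (s/2), w (ι j) = 2 * ((q j : ℝ) * zetaVal (2*j)) := by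
    intro j hj
    simp only [Finset.mem_Icc] at hj
    have h2j : s - (s - 2*j) = 2*j := by omega
    have heven : Even (2*j) := ⟨j, by ring⟩
    rw [hw, hι]
    simp only []
    have hvv : ∀ k : ℕ, val k (s - 2*j) = 2 * (((2:ℝ)^(2*j) - 1) * zetaVal (2*j)) := by
      intro k
      rw [hval]
      simp only []
      rw [h2j, heven.neg_one_pow]
      ring
    rw [Finset.sum_congr rfl (fun k _ => by rw [hvv k])]
    rw [← Finset.sum_mul, hq]
    push_cast
    ring
  have hfinal : (∑' ν, F ν) + (∑' ν, F ν)
      = 2 * ∑ j ∈ Finset.Icc 1 (s/2), (q j : ℝ) * zetaVal (2*j) := by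
    rw [h2F, hswap, himg, Finset.sum_congr rfl hterm, ← Finset.mul_sum]
  linarith
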